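/- Let T = {t ∈ ℝ : t ≥ 0} and let f, p : T → ℝ define a single-parameter mechanism. The mechanism is truthful, i.e. t·f(t') − p(t') ≤ t·f(t) − p(t) for all t, t' ≥ 0, if and only if (i) f is monotone non-decreasing on T, and (ii) p(t) = t·f(t) − ∫₀ᵗ f(s) ds + p(0) for every t ≥ 0 (the integral exists since f is monotone). -/

import Mathlib

open MeasureTheory

private lemma myerson_intInt {f : ℝ → ℝ} (hf : MonotoneOn f (Set.Ici 0))
    {a b : ℝ} (ha : 0 ≤ a) (hab : a ≤ b) :
    IntervalIntegrable f volume a b := by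
  apply MonotoneOn.intervalIntegrable
  apply hf.mono
  rw [Set.uIcc_of_le hab]
  exact fun x hx => le_trans ha hx.1

private lemma myerson_int_lb {f : ℝ → ℝ} (hf : MonotoneOn f (Set.Ici 0))
    {a b : ℝ} (ha : 0 ≤ a) (hab : a ≤ b) :
    f a * (b - a) ≤ ∫ s in a..b, f s := by
  have h := intervalIntegral.integral_mono_on hab (intervalIntegrable_const (c := f a))
    (myerson_intInt hf ha hab) (fun x hx => hf ha (le_trans ha hx.1) hx.1)
  simpa [mul_comm] using h

private lemma myerson_int_ub {f : ℝ → ℝ} (hf : MonotoneOn f (Set.Ici 0))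
    {a b : ℝ} (ha : 0 ≤ a) (hab : a ≤ b) :
    (∫ s in a..b, f s) ≤ f b * (b - a) := by
  have h := intervalIntegral.integral_mono_on hab (myerson_intInt hf ha hab)
    (intervalIntegrable_const (c := f b))
    (fun x hx => hf (le_trans ha hx.1) (le_trans ha hab) hx.2)
  simpa [mul_comm] using h

private lemma myerson_key {f g : ℝ → ℝ}
    (hf : MonotoneOn f (Set.Ici 0))
    (hg : ∀ a b : ℝ, 0 ≤ a → a ≤ b →
      f a * (b - a) ≤ g b - g a ∧ g b - g a ≤ f b * (b - a))
    {t : ℝ} (ht : 0 ≤ t) : g t - g 0 = ∫ s in (0:ℝ)..t, f s := by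
  have key : ∀ n : ℕ, 1 ≤ n →
      |g t - g 0 - ∫ s in (0:ℝ)..t, f s| ≤ (f t - f 0) * t / n := by
    intro n hn
    have hn0 : (n : ℝ) ≠ 0 := by positivity
    set s : ℕ → ℝ := fun i => (i : ℝ) * t / n with hs
    have hs0 : s 0 = 0 := by simp [hs]
    have hsn : s n = t := by simp only [hs]; exact mul_div_cancel_left₀ t hn0
    have hsnn : ∀ i : ℕ, 0 ≤ s i := by
      intro i; apply div_nonneg (mul_nonneg (by positivity) ht) (by positivity)
    have hstep : ∀ i : ℕ, s (i + 1) - s i = t / n := by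
      intro i; simp only [hs]; push_cast; ring
    have hstep' : ∀ i : ℕ, s i ≤ s (i + 1) := by
      intro i
      have : (0:ℝ) ≤ t / n := by positivity
      linarith [hstep i]
    -- telescoping sum for g
    have hgsum : ∑ i ∈ Finset.range n, (g (s (i+1)) - g (s i)) = g t - g 0 := by
      rw [Finset.sum_range_sub (fun i => g (s i))]
      rw [hs0, hsn]
    -- splitting of integral
    have hisum : ∑ i ∈ Finset.range n,
        (∫ x in s i..s (i+1), f x) = ∫ x in (0:ℝ)..t, f x := by
      rw [intervalIntegral.sum_integral_adjacent_intervals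
        (fun i _ => myerson_intInt hf (hsnn i) (hstep' i))]
      rw [hs0, hsn]
    -- per-interval bound
    have hterm : ∀ i : ℕ,
        |(g (s (i+1)) - g (s i)) - ∫ x in s i..s (i+1), f x|
          ≤ (f (s (i+1)) - f (s i)) * (t / n) := by
      intro i
      have h1 := (hg (s i) (s (i+1)) (hsnn i) (hstep' i)).1
      have h2 := (hg (s i) (s (i+1)) (hsnn i) (hstep' i)).2
      have h3 := myerson_int_lb hf (hsnn i) (hstep' i)
      have h4 := myerson_int_ub hf (hsnn i) (hstep' i)
      rw [hstep i] at h1 h2 h3 h4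
      rw [abs_le]
      constructor <;> nlinarith
    calc |g t - g 0 - ∫ s in (0:ℝ)..t, f s|
        = |∑ i ∈ Finset.range n,
            ((g (s (i+1)) - g (s i)) - ∫ x in s i..s (i+1), f x)| := by
          rw [Finset.sum_sub_distrib, hgsum, hisum]
      _ ≤ ∑ i ∈ Finset.range n,
            |(g (s (i+1)) - g (s i)) - ∫ x in s i..s (i+1), f x| :=
          Finset.abs_sum_le_sum_abs _ _
      _ ≤ ∑ i ∈ Finset.range n, (f (s (i+1)) - f (s i)) * (t / n) :=
          Finset.sum_le_sum (fun i _ => hterm i)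
      _ = (f t - f 0) * t / n := by
          rw [← Finset.sum_mul, Finset.sum_range_sub (fun i => f (s i)), hs0, hsn]
          ring
  -- take limit n → ∞
  have habs : |g t - g 0 - ∫ s in (0:ℝ)..t, f s| ≤ 0 := by
    have hl : Filter.Tendsto (fun n : ℕ => (f t - f 0) * t / n)
        Filter.atTop (nhds 0) := by
      exact Filter.Tendsto.div_atTop tendsto_const_nhds tendsto_natCast_atTop_atTop
    apply ge_of_tendsto hl
    filter_upwards [Filter.eventually_ge_atTop 1] with n hn using key n hn
  have := abs_nonneg (g t - g 0 - ∫ s in (0:ℝ)..t, f s)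
  have h0 : g t - g 0 - ∫ s in (0:ℝ)..t, f s = 0 := by
    rw [← abs_eq_zero]; linarith
  linarith

/-- Myerson's characterization for single-parameter mechanisms: a mechanism `(f, p)` on
the type space `[0, ∞)` with valuation `t ⬝ f(t')` is truthful iff the allocation rule
`f` is monotone non-decreasing and the payment satisfies the Myerson payment identity. -/
theorem myerson_single_parameter (f p : ℝ → ℝ) :
    (∀ t, 0 ≤ t → ∀ t', 0 ≤ t' → t * f t' - p t' ≤ t * f t - p t) ↔
    (MonotoneOn f (Set.Ici (0 : ℝ)) ∧
      ∀ t, 0 ≤ t → p t = t * f t - (∫ s in (0:ℝ)..t, f s) + p 0) := by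
  constructor
  · intro H
    have hmono : MonotoneOn f (Set.Ici (0 : ℝ)) := by
      intro a ha b hb hab
      simp only [Set.mem_Ici] at ha hb
      rcases eq_or_lt_of_le hab with rfl | hlt
      · exact le_rfl
      · by_contra h
        push_neg at h
        have h1 := H a ha b hb
        have h2 := H b hb a ha
        nlinarith [mul_pos (sub_pos.2 hlt) (sub_pos.2 h)]
    refine ⟨hmono, fun t ht => ?_⟩
    have hg : ∀ a b : ℝ, 0 ≤ a → a ≤ b →
        f a * (b - a) ≤ (fun x => x * f x - p x) b - (fun x => x * f x - p x) a ∧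
        (fun x => x * f x - p x) b - (fun x => x * f x - p x) a ≤ f b * (b - a) := by
      intro a b ha hab
      have hb : 0 ≤ b := le_trans ha hab
      have h1 := H b hb a ha
      have h2 := H a ha b hb
      constructor <;> simp only [] <;> nlinarith
    have := myerson_key hmono hg ht
    linarith [this]
  · rintro ⟨hmono, hpay⟩ t ht t' ht'
    rw [hpay t ht, hpay t' ht']
    rcases le_total t' t with h | h
    · have hsplit : (∫ s in (0:ℝ)..t', f s) + (∫ s in t'..t, f s)
          = ∫ s in (0:ℝ)..t, f s :=
        intervalIntegral.integral_add_adjacent_intervals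
          (myerson_intInt hmono le_rfl ht') (myerson_intInt hmono ht' h)
      have hlb := myerson_int_lb hmono ht' h
      linarith
    · have hsplit : (∫ s in (0:ℝ)..t, f s) + (∫ s in t..t', f s)
          = ∫ s in (0:ℝ)..t', f s :=
        intervalIntegral.integral_add_adjacent_intervals
          (myerson_intInt hmono le_rfl ht) (myerson_intInt hmono ht h)
      have hub := myerson_int_ub hmono ht h
      linarith
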